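/- arXiv:2008.04343 — 3 statements merged into one kernel-verified Lean document; each statement's English description precedes it below -/
import Mathlib

section
/- Let q : [0,1] → ℝ be continuously differentiable with q(0) = q(1) = 0. Then ∫₀¹ q(x)² dx ≤ (1/π²) ∫₀¹ q'(x)² dx (Poincaré inequality with optimal constant on the unit interval with Dirichlet boundary conditions). -/
open Real intervalIntegral

open MeasureTheory Complex Set AddCircle Filter in
/-- Parseval's identity on the interval `[0,2]`. -/
lemma poincare_parseval02 (f : ℝ → ℂ) (hf : Continuous f) (hper : f 0 = f 2) :
    Summable (fun n : ℤ => ‖fourierCoeffOn (by norm_num : (0:ℝ) < 2) f n‖ ^ 2) ∧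
      ∑' n : ℤ, ‖fourierCoeffOn (by norm_num : (0:ℝ) < 2) f n‖ ^ 2
        = (1 / 2) * ∫ x in (0:ℝ)..2, ‖f x‖ ^ 2 := by
  haveI : Fact (0 < (2:ℝ)) := ⟨by norm_num⟩
  set L : C(AddCircle (2:ℝ), ℂ) :=
    ⟨liftIco 2 0 f, liftIco_zero_continuous hper hf.continuousOn⟩ with hLdef
  set Lp2 := ContinuousMap.toLp (E := ℂ) 2 haarAddCircle ℂ L with hLp2
  have hcoeff : ∀ n : ℤ, fourierCoeff (⇑Lp2) n
      = fourierCoeffOn (by norm_num : (0:ℝ) < 2) f n := by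
    intro n
    rw [fourierCoeff_toLp]
    have h := fourierCoeff_liftIco_eq (T := 2) (a := 0) f n
    simp only [zero_add] at h
    exact h
  have hpars := tsum_sq_fourierCoeff Lp2
  have hae : (⇑Lp2) =ᵐ[haarAddCircle] ⇑L := ContinuousMap.coeFn_toLp (p := 2) (μ := haarAddCircle) (𝕜 := ℂ) L
  have hint1 : ∫ t, ‖Lp2 t‖ ^ 2 ∂haarAddCircle = ∫ t, ‖L t‖ ^ 2 ∂haarAddCircle := by
    refine integral_congr_ae ?_
    filter_upwards [hae] with t ht
    rw [ht]
  have hvol : ∫ t, ‖L t‖ ^ 2 ∂(volume : Measure (AddCircle (2:ℝ)))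
      = 2 * ∫ t, ‖L t‖ ^ 2 ∂haarAddCircle := by
    rw [volume_eq_smul_haarAddCircle, MeasureTheory.integral_smul_measure]
    norm_num
  have hint2 : ∫ x in (0:ℝ)..(0 + 2), ‖L x‖ ^ 2
      = ∫ t, ‖L t‖ ^ 2 ∂(volume : Measure (AddCircle (2:ℝ))) :=
    AddCircle.intervalIntegral_preimage 2 0 (fun t => ‖L t‖ ^ 2)
  have hcongr : ∫ x in (0:ℝ)..2, ‖L x‖ ^ 2 = ∫ x in (0:ℝ)..2, ‖f x‖ ^ 2 := by
    refine intervalIntegral.integral_congr_ae ?_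
    have h2 : ∀ᵐ x : ℝ ∂volume, x ≠ 2 := by
      rw [ae_iff]
      simpa using measure_singleton (2 : ℝ)
    filter_upwards [h2] with x hx hmem
    rw [Set.uIoc_of_le (by norm_num : (0:ℝ) ≤ 2)] at hmem
    have hx' : x ∈ Set.Ico (0:ℝ) 2 := ⟨hmem.1.le, lt_of_le_of_ne hmem.2 hx⟩
    have : L ((x : ℝ) : AddCircle (2:ℝ)) = f x := liftIco_zero_coe_apply hx'
    rw [this]
  have hsum : Summable fun n : ℤ => ‖fourierCoeff (⇑Lp2) n‖ ^ 2 := by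
    have hm := lp.memℓp (fourierBasis.repr Lp2)
    have hs := hm.summable (by norm_num : 0 < (2 : ENNReal).toReal)
    have : ∀ n : ℤ, ‖fourierBasis.repr Lp2 n‖ ^ (2 : ENNReal).toReal
        = ‖fourierCoeff (⇑Lp2) n‖ ^ 2 := by
      intro n
      rw [fourierBasis_repr]
      norm_num [Real.rpow_natCast]
    exact hs.congr this
  have hzz : ∫ x in (0:ℝ)..(0 + 2), ‖L x‖ ^ 2 = ∫ x in (0:ℝ)..2, ‖L x‖ ^ 2 := by norm_num
  constructor
  · refine hsum.congr fun n => ?_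
    rw [hcoeff]
  · calc ∑' n : ℤ, ‖fourierCoeffOn (by norm_num : (0:ℝ) < 2) f n‖ ^ 2
        = ∑' n : ℤ, ‖fourierCoeff (⇑Lp2) n‖ ^ 2 := by
          refine tsum_congr fun n => ?_
          rw [hcoeff]
      _ = ∫ t, ‖Lp2 t‖ ^ 2 ∂haarAddCircle := hpars
      _ = ∫ t, ‖L t‖ ^ 2 ∂haarAddCircle := hint1
      _ = (1 / 2) * ∫ t, ‖L t‖ ^ 2 ∂(volume : Measure (AddCircle (2:ℝ))) := by
          rw [hvol]; ring
      _ = (1 / 2) * ∫ x in (0:ℝ)..2, ‖f x‖ ^ 2 := by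
          rw [← hint2, hzz, hcongr]

theorem poincare_inequality_unit_interval
    (q : ℝ → ℝ) (hq : ContDiff ℝ 1 q)
    (h0 : q 0 = 0) (h1 : q 1 = 0) :
    ∫ x in (0:ℝ)..1, (q x) ^ 2 ≤ (1 / π ^ 2) * ∫ x in (0:ℝ)..1, (deriv q x) ^ 2 := by
  classical
  haveI : Fact (0 < (2:ℝ)) := ⟨by norm_num⟩
  have hab : (0:ℝ) < 2 := by norm_num
  have hqc : Continuous q := hq.continuous
  have hq'c : Continuous (deriv q) := hq.continuous_deriv le_rfl
  have hqd : Differentiable ℝ q := hq.differentiable one_ne_zero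
  set F : ℝ → ℂ := fun x => if x ≤ 1 then (q x : ℂ) else -(q (2 - x) : ℂ) with hFdef
  set G : ℝ → ℂ := fun x => if x ≤ 1 then ((deriv q x : ℝ) : ℂ) else ((deriv q (2 - x) : ℝ) : ℂ) with hGdef
  have hFc : Continuous F := by
    refine Continuous.if_le (Complex.continuous_ofReal.comp hqc)
      ((Complex.continuous_ofReal.comp (hqc.comp (continuous_const.sub continuous_id))).neg)
      continuous_id continuous_const ?_
    intro x hx
    change x = 1 at hx
    subst hx
    norm_num [h1]
  have hGc : Continuous G := by
    refine Continuous.if_le (Complex.continuous_ofReal.comp hq'c)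
      (Complex.continuous_ofReal.comp (hq'c.comp (continuous_const.sub continuous_id)))
      continuous_id continuous_const ?_
    intro x hx
    change x = 1 at hx
    subst hx
    norm_num
  have hQ' : ∀ x : ℝ, HasDerivAt (fun y => (q y : ℂ)) ((deriv q x : ℝ) : ℂ) x :=
    fun x => ((hqd x).hasDerivAt).ofReal_comp
  have hR' : ∀ x : ℝ, HasDerivAt (fun y : ℝ => -(q (2 - y) : ℂ)) ((deriv q (2 - x) : ℝ) : ℂ) x := by
    intro x
    have h1' : HasDerivAt (fun y : ℝ => q (2 - y)) (-(deriv q (2 - x))) x := by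
      have := ((hqd (2 - x)).hasDerivAt).comp x ((hasDerivAt_id x).const_sub 2)
      simpa [Function.comp_def] using this
    simpa [Pi.neg_def] using h1'.ofReal_comp.neg
  have hFd : ∀ x : ℝ, HasDerivAt F (G x) x := by
    intro x
    rcases lt_trichotomy x 1 with hx | hx | hx
    · have hev : F =ᶠ[nhds x] fun y => (q y : ℂ) := by
        filter_upwards [eventually_lt_nhds hx] with y hy
        simp [hFdef, hy.le]
      have : HasDerivAt F ((deriv q x : ℝ) : ℂ) x := (hQ' x).congr_of_eventuallyEq hev
      simpa [hGdef, hx.le] using this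
    · subst hx
      have hIic : HasDerivWithinAt F ((deriv q 1 : ℝ) : ℂ) (Set.Iic 1) 1 := by
        refine ((hQ' 1).hasDerivWithinAt).congr (fun y hy => ?_) (by simp [hFdef])
        have hy' : y ≤ 1 := hy
        simp [hFdef, hy']
      have hIci : HasDerivWithinAt F ((deriv q 1 : ℝ) : ℂ) (Set.Ici 1) 1 := by
        have h' := (hR' 1).hasDerivWithinAt (s := Set.Ici 1)
        rw [show (2:ℝ) - 1 = 1 by norm_num] at h'
        refine h'.congr (fun y hy => ?_) (by norm_num [hFdef, h1])
        rcases eq_or_lt_of_le (Set.mem_Ici.mp hy) with hy1 | hy1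
        · subst hy1
          norm_num [hFdef, h1]
        · simp [hFdef, not_le.mpr hy1]
      have := hIic.union hIci
      rw [Set.Iic_union_Ici, hasDerivWithinAt_univ] at this
      simpa [hGdef] using this
    · have hev : F =ᶠ[nhds x] fun y : ℝ => -(q (2 - y) : ℂ) := by
        filter_upwards [eventually_gt_nhds hx] with y hy
        simp [hFdef, not_le.mpr hy]
      have : HasDerivAt F ((deriv q (2 - x) : ℝ) : ℂ) x := (hR' x).congr_of_eventuallyEq hev
      simpa [hGdef, not_le.mpr hx] using this
  have hF0 : F 0 = 0 := by simp [hFdef, h0]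
  have hF2 : F 2 = 0 := by norm_num [hFdef, h0]
  have hGper : G 0 = G 2 := by norm_num [hGdef]
  have hGint : IntervalIntegrable G MeasureTheory.volume 0 2 :=
    hGc.intervalIntegrable 0 2
  -- coefficient relation
  have hrel : ∀ n : ℤ, n ≠ 0 →
      fourierCoeffOn hab G n = (π : ℂ) * Complex.I * n * fourierCoeffOn hab F n := by
    intro n hn
    have h := fourierCoeffOn_of_hasDerivAt hab hn (fun x _ => hFd x) hGint
    rw [hF2, hF0] at h
    have hne : (-2 * (π:ℂ) * Complex.I * n) ≠ 0 := by
      simp [Real.pi_ne_zero, Complex.I_ne_zero, hn]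
    have h2 := congrArg (fun z => (-2 * (π:ℂ) * Complex.I * n) * z) h
    rw [← mul_assoc, mul_one_div_cancel hne, one_mul] at h2
    push_cast at h2
    linear_combination ((1:ℂ)/2) * h2
  -- zeroth coefficient vanishes
  have hc0 : fourierCoeffOn hab F 0 = 0 := by
    rw [fourierCoeffOn_eq_integral]
    have e1 : ∫ x in (0:ℝ)..1, F x = ∫ x in (0:ℝ)..1, (q x : ℂ) := by
      refine intervalIntegral.integral_congr fun x hx => ?_
      rw [Set.uIcc_of_le (by norm_num : (0:ℝ) ≤ 1)] at hx
      simp [hFdef, hx.2]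
    have e2 : ∫ x in (1:ℝ)..2, F x = -∫ x in (0:ℝ)..1, (q x : ℂ) := by
      have e2' : ∫ x in (1:ℝ)..2, F x = ∫ x in (1:ℝ)..2, -(q (2 - x) : ℂ) := by
        refine intervalIntegral.integral_congr fun x hx => ?_
        rw [Set.uIcc_of_le (by norm_num : (1:ℝ) ≤ 2)] at hx
        rcases eq_or_lt_of_le hx.1 with hx1 | hx1
        · rw [← hx1]
          norm_num [hFdef, h1]
        · simp [hFdef, not_le.mpr hx1]
      rw [e2', intervalIntegral.integral_neg]
      congr 1
      have := intervalIntegral.integral_comp_sub_left (a := (1:ℝ)) (b := 2)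
        (fun y => (q y : ℂ)) 2
      norm_num at this
      rw [this]
    have hsplit : ∫ x in (0:ℝ)..2, F x
        = (∫ x in (0:ℝ)..1, F x) + ∫ x in (1:ℝ)..2, F x :=
      (intervalIntegral.integral_add_adjacent_intervals
        (hFc.intervalIntegrable 0 1) (hFc.intervalIntegrable 1 2)).symm
    simp only [Int.cast_zero, neg_zero, fourier_zero, one_smul]
    rw [hsplit, e1, e2]
    simp
  -- Parseval for F and G
  obtain ⟨hsF, hPF⟩ := poincare_parseval02 F hFc (by rw [hF0, hF2])
  obtain ⟨hsG, hPG⟩ := poincare_parseval02 G hGc hGper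
  -- compute the L² norms
  have normF : ∀ x : ℝ, x ∈ Set.uIcc (0:ℝ) 1 → ‖F x‖ ^ 2 = (q x) ^ 2 := by
    intro x hx
    rw [Set.uIcc_of_le (by norm_num : (0:ℝ) ≤ 1)] at hx
    simp [hFdef, hx.2, Complex.norm_real, sq_abs]
  have hFI : ∫ x in (0:ℝ)..2, ‖F x‖ ^ 2 = 2 * ∫ x in (0:ℝ)..1, (q x) ^ 2 := by
    have i1 : ∫ x in (0:ℝ)..1, ‖F x‖ ^ 2 = ∫ x in (0:ℝ)..1, (q x) ^ 2 :=
      intervalIntegral.integral_congr normF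
    have i2 : ∫ x in (1:ℝ)..2, ‖F x‖ ^ 2 = ∫ x in (0:ℝ)..1, (q x) ^ 2 := by
      have e2' : ∫ x in (1:ℝ)..2, ‖F x‖ ^ 2 = ∫ x in (1:ℝ)..2, (q (2 - x)) ^ 2 := by
        refine intervalIntegral.integral_congr fun x hx => ?_
        rw [Set.uIcc_of_le (by norm_num : (1:ℝ) ≤ 2)] at hx
        rcases eq_or_lt_of_le hx.1 with hx1 | hx1
        · rw [← hx1]
          norm_num [hFdef, h1]
        · simp [hFdef, not_le.mpr hx1, Complex.norm_real, sq_abs]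
      rw [e2']
      have := intervalIntegral.integral_comp_sub_left (a := (1:ℝ)) (b := 2)
        (fun y => (q y) ^ 2) 2
      norm_num at this
      rw [this]
    have hsplit : ∫ x in (0:ℝ)..2, ‖F x‖ ^ 2
        = (∫ x in (0:ℝ)..1, ‖F x‖ ^ 2) + ∫ x in (1:ℝ)..2, ‖F x‖ ^ 2 :=
      (intervalIntegral.integral_add_adjacent_intervals
        (((hFc.norm.pow 2).intervalIntegrable 0 1))
        (((hFc.norm.pow 2).intervalIntegrable 1 2))).symm
    rw [hsplit, i1, i2]
    ring
  have hGI : ∫ x in (0:ℝ)..2, ‖G x‖ ^ 2 = 2 * ∫ x in (0:ℝ)..1, (deriv q x) ^ 2 := by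
    have i1 : ∫ x in (0:ℝ)..1, ‖G x‖ ^ 2 = ∫ x in (0:ℝ)..1, (deriv q x) ^ 2 := by
      refine intervalIntegral.integral_congr fun x hx => ?_
      rw [Set.uIcc_of_le (by norm_num : (0:ℝ) ≤ 1)] at hx
      simp [hGdef, hx.2, Complex.norm_real, sq_abs]
    have i2 : ∫ x in (1:ℝ)..2, ‖G x‖ ^ 2 = ∫ x in (0:ℝ)..1, (deriv q x) ^ 2 := by
      have e2' : ∫ x in (1:ℝ)..2, ‖G x‖ ^ 2 = ∫ x in (1:ℝ)..2, (deriv q (2 - x)) ^ 2 := by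
        refine intervalIntegral.integral_congr fun x hx => ?_
        rw [Set.uIcc_of_le (by norm_num : (1:ℝ) ≤ 2)] at hx
        rcases eq_or_lt_of_le hx.1 with hx1 | hx1
        · rw [← hx1]
          norm_num [hGdef, Complex.norm_real, sq_abs]
        · simp [hGdef, not_le.mpr hx1, Complex.norm_real, sq_abs]
      rw [e2']
      have := intervalIntegral.integral_comp_sub_left (a := (1:ℝ)) (b := 2)
        (fun y => (deriv q y) ^ 2) 2
      norm_num at this
      rw [this]
    have hsplit : ∫ x in (0:ℝ)..2, ‖G x‖ ^ 2
        = (∫ x in (0:ℝ)..1, ‖G x‖ ^ 2) + ∫ x in (1:ℝ)..2, ‖G x‖ ^ 2 :=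
      (intervalIntegral.integral_add_adjacent_intervals
        (((hGc.norm.pow 2).intervalIntegrable 0 1))
        (((hGc.norm.pow 2).intervalIntegrable 1 2))).symm
    rw [hsplit, i1, i2]
    ring
  -- termwise comparison
  have hterm : ∀ n : ℤ,
      π ^ 2 * ‖fourierCoeffOn hab F n‖ ^ 2 ≤ ‖fourierCoeffOn hab G n‖ ^ 2 := by
    intro n
    rcases eq_or_ne n 0 with hn | hn
    · subst hn
      rw [hc0]
      simpa using sq_nonneg ‖fourierCoeffOn hab G 0‖
    · rw [hrel n hn]
      have hnormeq : ‖(π : ℂ) * Complex.I * n * fourierCoeffOn hab F n‖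
          = π * |(n:ℝ)| * ‖fourierCoeffOn hab F n‖ := by
        simp [norm_mul, Complex.norm_real, abs_of_pos Real.pi_pos]
      rw [hnormeq]
      have h1n : (1:ℝ) ≤ |(n:ℝ)| := by
        rw [← Int.cast_abs]
        exact_mod_cast Int.one_le_abs hn
      have hπ : (0:ℝ) < π := Real.pi_pos
      have ha : (1:ℝ) ≤ |(n:ℝ)| ^ 2 := by nlinarith
      calc π ^ 2 * ‖fourierCoeffOn hab F n‖ ^ 2
          = π ^ 2 * 1 * ‖fourierCoeffOn hab F n‖ ^ 2 := by ring
        _ ≤ π ^ 2 * |(n:ℝ)| ^ 2 * ‖fourierCoeffOn hab F n‖ ^ 2 := by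
            nlinarith [mul_nonneg (mul_nonneg (sq_nonneg π) (sub_nonneg.mpr ha))
              (sq_nonneg ‖fourierCoeffOn hab F n‖)]
        _ = (π * |(n:ℝ)| * ‖fourierCoeffOn hab F n‖) ^ 2 := by ring
  -- assemble
  have key : π ^ 2 * ∫ x in (0:ℝ)..1, (q x) ^ 2 ≤ ∫ x in (0:ℝ)..1, (deriv q x) ^ 2 := by
    have e1 : ∫ x in (0:ℝ)..1, (q x) ^ 2 = ∑' n : ℤ, ‖fourierCoeffOn hab F n‖ ^ 2 := by
      rw [hPF, hFI]
      ring
    have e2 : ∫ x in (0:ℝ)..1, (deriv q x) ^ 2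
        = ∑' n : ℤ, ‖fourierCoeffOn hab G n‖ ^ 2 := by
      rw [hPG, hGI]
      ring
    rw [e1, e2, ← tsum_mul_left]
    exact Summable.tsum_le_tsum hterm (hsF.mul_left _) hsG
  have hπ2 : (0:ℝ) < π ^ 2 := by positivity
  rw [one_div, inv_mul_eq_div, le_div_iff₀ hπ2]
  linarith [key, mul_comm (∫ x in (0:ℝ)..1, (q x) ^ 2) (π ^ 2)]
end

section
/- Suppose p is C² on [0,1]² and satisfies p_xx + δ^{-2} p_zz = 0 with boundary conditions p_z(x,1) = 0 and p_z(x,0) = -δ² a(x) for a continuous function a. Then the z-average p₀(x) = ∫₀¹ p(x,z) dz satisfies p₀''(x) = -a(x) for all x ∈ (0,1). -/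
open Real MeasureTheory intervalIntegral

/-- Differentiation under the interval integral for jointly continuous data. -/
lemma param_hasDerivAt (F F' : ℝ → ℝ → ℝ)
    (hF : Continuous fun q : ℝ × ℝ => F q.1 q.2)
    (hF' : Continuous fun q : ℝ × ℝ => F' q.1 q.2)
    (hd : ∀ x z, HasDerivAt (fun x' => F x' z) (F' x z) x) (x₀ : ℝ) :
    HasDerivAt (fun x => ∫ z in (0:ℝ)..1, F x z) (∫ z in (0:ℝ)..1, F' x₀ z) x₀ := by
  have hK : IsCompact ((Set.Icc (x₀ - 1) (x₀ + 1)) ×ˢ (Set.Icc (0:ℝ) 1)) :=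
    (isCompact_Icc).prod isCompact_Icc
  obtain ⟨C, hC⟩ := hK.exists_bound_of_continuousOn hF'.continuousOn
  have key := intervalIntegral.hasDerivAt_integral_of_dominated_loc_of_deriv_le
    (F := F) (F' := F') (x₀ := x₀) (a := 0) (b := 1) (bound := fun _ => C)
    (μ := volume) (s := Metric.ball x₀ 1) (Metric.ball_mem_nhds x₀ one_pos)
    (Filter.Eventually.of_forall fun x =>
      ((hF.comp (Continuous.prodMk_right x)).aestronglyMeasurable))
    ((hF.comp (Continuous.prodMk_right x₀)).intervalIntegrable 0 1)
    ((hF'.comp (Continuous.prodMk_right x₀)).aestronglyMeasurable)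
    ?_ (intervalIntegrable_const) ?_
  · exact key.2
  · refine Filter.Eventually.of_forall fun z hz x hx => ?_
    have hx' : x ∈ Set.Icc (x₀ - 1) (x₀ + 1) := by
      have := abs_lt.1 (mem_ball_iff_norm.1 hx)
      constructor <;> linarith [this.1, this.2]
    have hz' : z ∈ Set.Icc (0:ℝ) 1 := by
      rw [Set.uIoc_of_le (by norm_num : (0:ℝ) ≤ 1)] at hz
      exact ⟨le_of_lt hz.1, hz.2⟩
    exact hC (x, z) ⟨hx', hz'⟩
  · exact Filter.Eventually.of_forall fun z _ x _ => hd x z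

theorem averaged_pressure_equation
    (δ : ℝ) (hδ : 0 < δ)
    (p : ℝ → ℝ → ℝ) (a : ℝ → ℝ)
    (hp : ContDiff ℝ 2 (fun q : ℝ × ℝ => p q.1 q.2))
    (ha : Continuous a)
    (hpde : ∀ x z, x ∈ Set.Icc (0:ℝ) 1 → z ∈ Set.Icc (0:ℝ) 1 →
      deriv (deriv (fun x' => p x' z)) x + (1 / δ ^ 2) * deriv (deriv (p x)) z = 0)
    (hbc1 : ∀ x, x ∈ Set.Icc (0:ℝ) 1 → deriv (p x) 1 = 0)
    (hbc0 : ∀ x, x ∈ Set.Icc (0:ℝ) 1 → deriv (p x) 0 = -δ ^ 2 * a x)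
    (p₀ : ℝ → ℝ) (hp₀ : ∀ x, p₀ x = ∫ z in (0:ℝ)..1, p x z) :
    ∀ x, x ∈ Set.Ioo (0:ℝ) 1 → deriv (deriv p₀) x = -a x := by
  set P : ℝ × ℝ → ℝ := fun q => p q.1 q.2 with hP_def
  have hP : ContDiff ℝ 2 P := hp
  -- Partial x derivative as a function of both variables
  set u : ℝ → ℝ → ℝ := fun x z => fderiv ℝ P (x, z) (1, 0) with hu_def
  have hQ : ContDiff ℝ 1 (fun q : ℝ × ℝ => fderiv ℝ P q) :=
    hP.fderiv_right (by norm_num)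
  have hu_cont : Continuous fun q : ℝ × ℝ => u q.1 q.2 := by
    exact (hQ.clm_apply contDiff_const).continuous
  -- line inclusion maps
  have hline : ∀ z x : ℝ, HasDerivAt (fun x' : ℝ => ((x', z) : ℝ × ℝ)) (1, 0) x := by
    intro z x
    exact (hasDerivAt_id x).prodMk (hasDerivAt_const x z)
  have hlinez : ∀ x z : ℝ, HasDerivAt (fun z' : ℝ => ((x, z') : ℝ × ℝ)) (0, 1) z := by
    intro x z
    exact (hasDerivAt_const z x).prodMk (hasDerivAt_id z)
  -- first partial in x
  have hdu : ∀ x z, HasDerivAt (fun x' => p x' z) (u x z) x := by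
    intro x z
    have h1 : HasFDerivAt P (fderiv ℝ P (x, z)) (x, z) :=
      (hP.differentiable (by norm_num)).differentiableAt.hasFDerivAt
    exact h1.comp_hasDerivAt x (hline z x)
  -- second partial in x
  set v : ℝ → ℝ → ℝ := fun x z => fderiv ℝ (fun q : ℝ × ℝ => u q.1 q.2) (x, z) (1, 0)
    with hv_def
  have hv_cont : Continuous fun q : ℝ × ℝ => v q.1 q.2 := by
    have : Continuous (fderiv ℝ (fun q : ℝ × ℝ => u q.1 q.2)) :=
      ((hQ.clm_apply contDiff_const).continuous_fderiv one_ne_zero)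
    exact (this.clm_apply continuous_const).comp continuous_id
  have hdv : ∀ x z, HasDerivAt (fun x' => u x' z) (v x z) x := by
    intro x z
    have h1 : HasFDerivAt (fun q : ℝ × ℝ => u q.1 q.2)
        (fderiv ℝ (fun q : ℝ × ℝ => u q.1 q.2) (x, z)) (x, z) :=
      (((hQ.clm_apply contDiff_const).differentiable one_ne_zero) (x, z)).hasFDerivAt
    exact h1.comp_hasDerivAt x (hline z x)
  -- partials in z
  set w : ℝ → ℝ → ℝ := fun x z => fderiv ℝ P (x, z) (0, 1) with hw_def
  have hw_cont : Continuous fun q : ℝ × ℝ => w q.1 q.2 :=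
    (hQ.clm_apply contDiff_const).continuous
  have hdw : ∀ x z, HasDerivAt (p x) (w x z) z := by
    intro x z
    have h1 : HasFDerivAt P (fderiv ℝ P (x, z)) (x, z) :=
      (hP.differentiable (by norm_num)).differentiableAt.hasFDerivAt
    exact h1.comp_hasDerivAt z (hlinez x z)
  set w2 : ℝ → ℝ → ℝ := fun x z => fderiv ℝ (fun q : ℝ × ℝ => w q.1 q.2) (x, z) (0, 1)
    with hw2_def
  have hw2_cont : Continuous fun q : ℝ × ℝ => w2 q.1 q.2 := by
    have : Continuous (fderiv ℝ (fun q : ℝ × ℝ => w q.1 q.2)) :=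
      ((hQ.clm_apply contDiff_const).continuous_fderiv one_ne_zero)
    exact (this.clm_apply continuous_const).comp continuous_id
  have hdw2 : ∀ x z, HasDerivAt (fun z' => w x z') (w2 x z) z := by
    intro x z
    have h1 : HasFDerivAt (fun q : ℝ × ℝ => w q.1 q.2)
        (fderiv ℝ (fun q : ℝ × ℝ => w q.1 q.2) (x, z)) (x, z) :=
      (((hQ.clm_apply contDiff_const).differentiable one_ne_zero) (x, z)).hasFDerivAt
    exact h1.comp_hasDerivAt z (hlinez x z)
  -- identify derivs appearing in hypotheses
  have hderiv_px : ∀ x z, deriv (fun x' => p x' z) x = u x z := fun x z => (hdu x z).deriv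
  have hderiv_pz : ∀ x z, deriv (p x) z = w x z := fun x z => (hdw x z).deriv
  have hderiv2_px : ∀ x z, deriv (deriv (fun x' => p x' z)) x = v x z := by
    intro x z
    have : deriv (fun x' => p x' z) = fun x' => u x' z := funext fun x' => hderiv_px x' z
    rw [this]; exact (hdv x z).deriv
  have hderiv2_pz : ∀ x z, deriv (deriv (p x)) z = w2 x z := by
    intro x z
    have : deriv (p x) = fun z' => w x z' := funext fun z' => hderiv_pz x z'
    rw [this]; exact (hdw2 x z).deriv
  -- first derivative of p₀
  have hp_cont : Continuous fun q : ℝ × ℝ => p q.1 q.2 := hP.continuous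
  have hd1 : ∀ x, HasDerivAt p₀ (∫ z in (0:ℝ)..1, u x z) x := by
    intro x
    have := param_hasDerivAt p u hp_cont hu_cont hdu x
    exact this.congr_of_eventuallyEq (Filter.Eventually.of_forall fun y => (hp₀ y))
  have hd1' : deriv p₀ = fun x => ∫ z in (0:ℝ)..1, u x z :=
    funext fun x => (hd1 x).deriv
  have hd2 : ∀ x, HasDerivAt (deriv p₀) (∫ z in (0:ℝ)..1, v x z) x := by
    intro x
    rw [hd1']
    exact param_hasDerivAt u v hu_cont hv_cont hdv x
  intro x hx
  have hxI : x ∈ Set.Icc (0:ℝ) 1 := ⟨le_of_lt hx.1, le_of_lt hx.2⟩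
  rw [(hd2 x).deriv]
  -- use the PDE: v x z = -(1/δ²) w2 x z on [0,1]
  have hδ2 : (δ:ℝ) ^ 2 ≠ 0 := pow_ne_zero 2 (ne_of_gt hδ)
  have hcongr : ∀ z ∈ Set.uIcc (0:ℝ) 1, v x z = -(1 / δ ^ 2) * w2 x z := by
    intro z hz
    rw [Set.uIcc_of_le (by norm_num : (0:ℝ) ≤ 1)] at hz
    have := hpde x z hxI hz
    rw [hderiv2_px, hderiv2_pz] at this
    linarith
  rw [intervalIntegral.integral_congr hcongr]
  -- FTC for the z integral
  have h_ftc : (∫ z in (0:ℝ)..1, w2 x z) = w x 1 - w x 0 := by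
    apply intervalIntegral.integral_deriv_eq_sub' (fun z => w x z)
    · exact funext fun z => (hdw2 x z).deriv
    · intro z _; exact (hdw2 x z).differentiableAt
    · exact (hw2_cont.comp (Continuous.prodMk_right x)).continuousOn
  have hw1 : w x 1 = 0 := by rw [← hderiv_pz]; exact hbc1 x hxI
  have hw0 : w x 0 = -δ ^ 2 * a x := by rw [← hderiv_pz]; exact hbc0 x hxI
  rw [intervalIntegral.integral_const_mul, h_ftc, hw1, hw0]
  field_simp
  ring
end

section
/- Let ψ : [0,1] × [0,T] → ℝ be continuous with ψ_x continuous, and suppose w satisfies ẇ(x,t) = -∫₀ᵗ ψ_xx(x,s) ds with ψ(0,t) = ψ(1,t) = 0. Then ∫₀ᵀ∫₀¹ ψ(x,t) ẇ(x,t) dx dt = (1/2) ∫₀¹ (∫₀ᵀ ψ_x(x,t) dt)² dx ≥ 0. -/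
open Real MeasureTheory intervalIntegral

theorem cross_term_nonnegative
    (T : ℝ) (hT : 0 < T)
    (ψ w : ℝ → ℝ → ℝ)
    (hψ : ∀ t, ContDiff ℝ 2 (fun x => ψ x t))
    (hψc : Continuous (fun y : ℝ × ℝ => ψ y.1 y.2))
    (hψxc : Continuous (fun y : ℝ × ℝ => deriv (fun x' => ψ x' y.2) y.1))
    (hψxxc : Continuous (fun y : ℝ × ℝ => deriv (deriv (fun x' => ψ x' y.2)) y.1))
    (hbc : ∀ t, ψ 0 t = 0 ∧ ψ 1 t = 0)
    (hw : ∀ x t, deriv (w x) t = -∫ s in (0:ℝ)..t, deriv (deriv (fun x' => ψ x' s)) x) :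
    (∫ t in (0:ℝ)..T, ∫ x in (0:ℝ)..1, ψ x t * deriv (w x) t) =
      (1 / 2) * ∫ x in (0:ℝ)..1, (∫ t in (0:ℝ)..T, deriv (fun x' => ψ x' t) x) ^ 2 ∧
    0 ≤ ∫ t in (0:ℝ)..T, ∫ x in (0:ℝ)..1, ψ x t * deriv (w x) t := by
  set g : ℝ → ℝ → ℝ := fun x t => deriv (fun x' => ψ x' t) x with hgdef
  set h : ℝ → ℝ → ℝ := fun x t => deriv (deriv (fun x' => ψ x' t)) x with hhdef
  set Φ : ℝ → ℝ → ℝ := fun x t => ∫ s in (0:ℝ)..t, g x s with hΦdef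
  -- basic derivative facts
  have F1 : ∀ t x, HasDerivAt (fun x' => ψ x' t) (g x t) x := fun t x =>
    (((hψ t).differentiable (by norm_num)) x).hasDerivAt
  have F2 : ∀ t x, HasDerivAt (fun x' => g x' t) (h x t) x := by
    intro t x
    have h2 : ContDiff ℝ (1 + 1) (fun x => ψ x t) := by
      convert hψ t using 2
      exact one_add_one_eq_two
    have := (contDiff_succ_iff_deriv.mp h2).2.2
    exact ((this.differentiable one_ne_zero) x).hasDerivAt
  -- continuity facts
  have Φc : Continuous fun p : ℝ × ℝ => Φ p.1 p.2 :=
    continuous_parametric_primitive_of_continuous hψxc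
  have gc : Continuous fun p : ℝ × ℝ => g p.1 p.2 := hψxc
  have hc : Continuous fun p : ℝ × ℝ => h p.1 p.2 := hψxxc
  have Hc : ∀ t, Continuous fun x => ∫ s in (0:ℝ)..t, h x s := fun t =>
    continuous_parametric_intervalIntegral_of_continuous' (f := fun x s => h x s) hc 0 t
  -- differentiation under the integral sign
  have F4 : ∀ t x, HasDerivAt (fun x' => Φ x' t) (∫ s in (0:ℝ)..t, h x s) x := by
    intro t x
    obtain ⟨C, hC⟩ := (IsCompact.exists_bound_of_continuousOn
      ((isCompact_Icc (a := x - 1) (b := x + 1)).prod (isCompact_uIcc (a := (0:ℝ)) (b := t)))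
      hc.continuousOn)
    have main := intervalIntegral.hasDerivAt_integral_of_dominated_loc_of_deriv_le
      (F := fun x' s => g x' s) (F' := fun x' s => h x' s) (x₀ := x) (a := 0) (b := t)
      (bound := fun _ => C) (μ := volume) (Metric.ball_mem_nhds x one_pos)
      (Filter.Eventually.of_forall fun x' =>
        (gc.comp ((continuous_const : Continuous fun _ : ℝ => x').prodMk
          continuous_id)).aestronglyMeasurable.restrict)
      ((gc.comp ((continuous_const : Continuous fun _ : ℝ => x).prodMk
          continuous_id)).intervalIntegrable 0 t)
      ((hc.comp ((continuous_const : Continuous fun _ : ℝ => x).prodMk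
          continuous_id)).aestronglyMeasurable.restrict)
      (Filter.Eventually.of_forall fun s hs x' hx' => by
        have : (x', s) ∈ Set.Icc (x - 1) (x + 1) ×ˢ Set.uIcc 0 t := by
          constructor
          · have := Metric.mem_ball.mp hx'
            rw [Real.dist_eq] at this
            constructor <;> [linarith [abs_le.mp this.le]; linarith [(abs_le.mp this.le).2]]
          · exact Set.uIoc_subset_uIcc hs
        exact hC _ this)
      (intervalIntegrable_const)
      (Filter.Eventually.of_forall fun s _ x' _ => F2 s x')
    exact main.2
  -- integration by parts in x, for each fixed t
  have IBP : ∀ t, (∫ x in (0:ℝ)..1, ψ x t * deriv (w x) t) =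
      ∫ x in (0:ℝ)..1, g x t * Φ x t := by
    intro t
    have hrw : (∫ x in (0:ℝ)..1, ψ x t * deriv (w x) t) =
        - ∫ x in (0:ℝ)..1, ψ x t * (∫ s in (0:ℝ)..t, h x s) := by
      rw [← intervalIntegral.integral_neg]
      apply intervalIntegral.integral_congr
      intro x _
      simp only [hw x t]
      show ψ x t * -(∫ s in (0:ℝ)..t, h x s) = -(ψ x t * ∫ s in (0:ℝ)..t, h x s)
      ring
    have hparts := intervalIntegral.integral_mul_deriv_eq_deriv_mul
      (u := fun x => ψ x t) (v := fun x => Φ x t)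
      (u' := fun x => g x t) (v' := fun x => ∫ s in (0:ℝ)..t, h x s)
      (a := 0) (b := 1)
      (fun x _ => F1 t x) (fun x _ => F4 t x)
      ((gc.comp (continuous_id.prodMk continuous_const)).intervalIntegrable 0 1)
      ((Hc t).intervalIntegrable 0 1)
    rw [hrw, hparts]
    simp [(hbc t).1, (hbc t).2]
  -- Fubini swap
  have gΦc : Continuous fun p : ℝ × ℝ => g p.1 p.2 * Φ p.1 p.2 := gc.mul Φc
  have swap : (∫ t in (0:ℝ)..T, ∫ x in (0:ℝ)..1, g x t * Φ x t) =
      ∫ x in (0:ℝ)..1, ∫ t in (0:ℝ)..T, g x t * Φ x t := by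
    have hint : Integrable (Function.uncurry fun t x => g x t * Φ x t)
        ((volume.restrict (Set.Ioc (0:ℝ) T)).prod (volume.restrict (Set.Ioc (0:ℝ) 1))) := by
      rw [Measure.prod_restrict]
      have : IntegrableOn (Function.uncurry fun t x => g x t * Φ x t)
          (Set.Icc (0:ℝ) T ×ˢ Set.Icc (0:ℝ) 1) (volume.prod volume) :=
        ContinuousOn.integrableOn_compact (isCompact_Icc.prod isCompact_Icc)
          (gΦc.comp (continuous_snd.prodMk continuous_fst)).continuousOn
      exact this.mono_set (Set.prod_mono Set.Ioc_subset_Icc_self Set.Ioc_subset_Icc_self)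
    have := MeasureTheory.integral_integral_swap hint
    rw [intervalIntegral.integral_of_le hT.le, intervalIntegral.integral_of_le (by norm_num : (0:ℝ) ≤ 1)]
    simp only [intervalIntegral.integral_of_le hT.le,
      intervalIntegral.integral_of_le (by norm_num : (0:ℝ) ≤ 1)] at this ⊢
    exact this
  -- inner time integral
  have F7 : ∀ x, (∫ t in (0:ℝ)..T, g x t * Φ x t) = Φ x T ^ 2 / 2 := by
    intro x
    have hgx : Continuous fun t => g x t :=
      gc.comp ((continuous_const : Continuous fun _ : ℝ => x).prodMk continuous_id)
    have hΦx : ∀ t, HasDerivAt (fun t' => Φ x t') (g x t) t := fun t =>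
      (hgx.integral_hasStrictDerivAt 0 t).hasDerivAt
    have hD : ∀ t, HasDerivAt (fun t' => Φ x t' ^ 2 / 2) (g x t * Φ x t) t := by
      intro t
      have : HasDerivAt (fun t' => Φ x t' ^ 2 / 2) (((2:ℕ):ℝ) * Φ x t ^ (2 - 1) * g x t / 2) t :=
        (((hΦx t).fun_pow 2).div_const 2)
      convert this using 1
      ring
    have hcont : IntervalIntegrable (fun t => g x t * Φ x t) volume 0 T :=
      (hgx.mul (Φc.comp ((continuous_const : Continuous fun _ : ℝ => x).prodMk
        continuous_id))).intervalIntegrable 0 T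
    have := intervalIntegral.integral_eq_sub_of_hasDerivAt (fun t _ => hD t) hcont
    rw [this]
    simp [hΦdef]
  -- put it together
  have key : (∫ t in (0:ℝ)..T, ∫ x in (0:ℝ)..1, ψ x t * deriv (w x) t) =
      (1 / 2) * ∫ x in (0:ℝ)..1, (∫ t in (0:ℝ)..T, g x t) ^ 2 := by
    calc (∫ t in (0:ℝ)..T, ∫ x in (0:ℝ)..1, ψ x t * deriv (w x) t)
        = ∫ t in (0:ℝ)..T, ∫ x in (0:ℝ)..1, g x t * Φ x t := by
          apply intervalIntegral.integral_congr; intro t _; exact IBP t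
      _ = ∫ x in (0:ℝ)..1, ∫ t in (0:ℝ)..T, g x t * Φ x t := swap
      _ = ∫ x in (0:ℝ)..1, Φ x T ^ 2 / 2 := by
          apply intervalIntegral.integral_congr; intro x _; exact F7 x
      _ = (1 / 2) * ∫ x in (0:ℝ)..1, (∫ t in (0:ℝ)..T, g x t) ^ 2 := by
          rw [intervalIntegral.integral_div]
          ring
  refine ⟨key, ?_⟩
  rw [key]
  apply mul_nonneg (by norm_num)
  apply intervalIntegral.integral_nonneg (by norm_num)
  intro x _
  positivity
end
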